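/- Let g : ℝ → ℝ be four times continuously differentiable, let t ∈ ℝ, τ > 0, θ ∈ ℝ with 0 ≤ θ ≤ 1/2, and suppose |g''''(s)| ≤ M for all s ∈ [t − τ, t + τ]. Then |(g(t + τ) − 2g(t) + g(t − τ))/τ² − (θ·g''(t + τ) + (1 − 2θ)·g''(t) + θ·g''(t − τ))| ≤ (1/12 + θ)·M·τ². -/

import Mathlib

open Set

lemma iDW_eq {f : ℝ → ℝ} {n : ℕ} (hf : ContDiff ℝ (n : ℕ∞) f) {m : ℕ} (hmn : m ≤ n)
    {s : Set ℝ} (hs : UniqueDiffOn ℝ s) {x : ℝ} (hx : x ∈ s) :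
    iteratedDerivWithin m f s x = iteratedDeriv m f x := by
  rw [iteratedDerivWithin_eq_iteratedFDerivWithin, iteratedDeriv_eq_iteratedFDeriv]
  congr 1
  have h := (((contDiff_iff_ftaylorSeries.mp hf).hasFTaylorSeriesUpToOn univ).mono
    (subset_univ s)).eq_iteratedFDerivWithin_of_uniqueDiffOn (m := m) (by exact_mod_cast hmn) hs hx
  exact h.symm

lemma taylor_lagrange (f : ℝ → ℝ) (n : ℕ) (hf : ContDiff ℝ ((n + 1 : ℕ) : ℕ∞) f) (a b : ℝ)
    (hab : a < b) :
    ∃ ξ ∈ Set.Ioo a b, f b =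
      (∑ k ∈ Finset.range (n + 1), (b - a) ^ k / k.factorial * iteratedDeriv k f a) +
        iteratedDeriv (n + 1) f ξ * (b - a) ^ (n + 1) / (n + 1).factorial := by
  have hf' := hf
  have hfn : ContDiffOn ℝ n f (Icc a b) := (hf'.of_le (by exact_mod_cast Nat.le_succ n)).contDiffOn
  have hdiff : DifferentiableOn ℝ (iteratedDerivWithin n f (Icc a b)) (Ioo a b) := by
    have : ∀ x ∈ Ioo a b, iteratedDerivWithin n f (Icc a b) x = iteratedDeriv n f x :=
      fun x hx => iDW_eq hf' (Nat.le_succ n) (uniqueDiffOn_Icc hab) (Ioo_subset_Icc_self hx)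
    exact DifferentiableOn.congr
      ((hf'.differentiable_iteratedDeriv n (by exact_mod_cast n.lt_succ_self)).differentiableOn)
      this
  obtain ⟨ξ, hξ, hT⟩ := taylor_mean_remainder_lagrange hab.ne (by rwa [uIcc_of_le hab.le])
    (by rwa [uIcc_of_le hab.le, uIoo_of_lt hab])
  rw [uIcc_of_le hab.le] at hT
  rw [uIoo_of_lt hab] at hξ
  refine ⟨ξ, hξ, ?_⟩
  rw [taylor_within_apply] at hT
  have h1 : ∀ k ≤ n, iteratedDerivWithin k f (Icc a b) a = iteratedDeriv k f a :=
    fun k hk => iDW_eq hf' (hk.trans (Nat.le_succ n)) (uniqueDiffOn_Icc hab)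
      (left_mem_Icc.mpr hab.le)
  have h2 : iteratedDerivWithin (n + 1) f (Icc a b) ξ = iteratedDeriv (n + 1) f ξ :=
    iDW_eq hf' le_rfl (uniqueDiffOn_Icc hab) (Ioo_subset_Icc_self hξ)
  rw [h2] at hT
  have hsum : (∑ k ∈ Finset.range (n + 1),
      (((k.factorial : ℝ))⁻¹ * (b - a) ^ k) • iteratedDerivWithin k f (Icc a b) a) =
      ∑ k ∈ Finset.range (n + 1), (b - a) ^ k / k.factorial * iteratedDeriv k f a := by
    refine Finset.sum_congr rfl fun k hk => ?_
    rw [h1 k (Nat.lt_succ_iff.mp (Finset.mem_range.mp hk)), smul_eq_mul]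
    ring
  rw [hsum] at hT
  linarith [hT]

lemma iteratedDeriv_comp_const_sub' (n : ℕ) (f : ℝ → ℝ) (c a : ℝ) :
    iteratedDeriv n (fun x => f (c - x)) a = (-1 : ℝ) ^ n * iteratedDeriv n f (c - a) := by
  have key := iteratedDeriv_comp_neg n (fun y => f (c + y)) a
  rw [iteratedDeriv_comp_const_add] at key
  have h : (fun x : ℝ => f (c - x)) = fun x => (fun y => f (c + y)) (-x) := by
    funext x; simp [sub_eq_add_neg]
  rw [h, key]
  simp [sub_eq_add_neg, smul_eq_mul]

/-- order-3 Taylor with Lagrange remainder, forward step -/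
lemma taylor4 (f : ℝ → ℝ) (hf : ContDiff ℝ 4 f) (a h : ℝ) (hh : 0 < h) :
    ∃ ξ ∈ Set.Ioo a (a + h), f (a + h) = f a + h * deriv f a + h ^ 2 / 2 * iteratedDeriv 2 f a +
      h ^ 3 / 6 * iteratedDeriv 3 f a + h ^ 4 / 24 * iteratedDeriv 4 f ξ := by
  obtain ⟨ξ, hξ, hT⟩ := taylor_lagrange f 3 (by exact_mod_cast hf) a (a + h) (by linarith)
  refine ⟨ξ, hξ, ?_⟩
  simp [Finset.sum_range_succ, Nat.factorial, iteratedDeriv_one] at hT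
  rw [hT]; ring_nf

/-- order-1 Taylor with Lagrange remainder, forward step -/
lemma taylor2 (f : ℝ → ℝ) (hf : ContDiff ℝ 2 f) (a h : ℝ) (hh : 0 < h) :
    ∃ ξ ∈ Set.Ioo a (a + h), f (a + h) = f a + h * deriv f a + h ^ 2 / 2 * iteratedDeriv 2 f ξ := by
  obtain ⟨ξ, hξ, hT⟩ := taylor_lagrange f 1 (by exact_mod_cast hf) a (a + h) (by linarith)
  refine ⟨ξ, hξ, ?_⟩
  simp [Finset.sum_range_succ, Nat.factorial, iteratedDeriv_one] at hT
  rw [hT]; ring_nf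

/-- Second-order local consistency of the implicit θ-scheme for the wave equation:
if `g` is C⁴ with `|g''''| ≤ M` on `[t−τ, t+τ]` and `0 ≤ θ ≤ 1/2`, then the residual
`(g(t+τ) − 2g(t) + g(t−τ))/τ² − (θg''(t+τ) + (1−2θ)g''(t) + θg''(t−τ))`
is bounded by `(1/12 + θ)·M·τ²`. -/
theorem stmt12 (g : ℝ → ℝ) (hg : ContDiff ℝ 4 g) (t τ θ M : ℝ) (hτ : 0 < τ)
    (hθ0 : 0 ≤ θ) (hθ1 : θ ≤ 1 / 2)
    (hM : ∀ s ∈ Set.Icc (t - τ) (t + τ), |iteratedDeriv 4 g s| ≤ M) :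
    |(g (t + τ) - 2 * g t + g (t - τ)) / τ ^ 2 -
        (θ * iteratedDeriv 2 g (t + τ) + (1 - 2 * θ) * iteratedDeriv 2 g t +
          θ * iteratedDeriv 2 g (t - τ))| ≤ (1 / 12 + θ) * M * τ ^ 2 := by
  set c := 2 * t with hc
  -- reflected g
  have hGc : ContDiff ℝ 4 (fun s : ℝ => g (c - s)) :=
    hg.comp (contDiff_const.sub contDiff_id)
  -- second derivative
  set f2 := iteratedDeriv 2 g with hf2def
  have hiter : ∀ m : ℕ, iteratedDeriv m f2 = iteratedDeriv (m + 2) g := by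
    intro m
    rw [hf2def, iteratedDeriv_eq_iterate, iteratedDeriv_eq_iterate, iteratedDeriv_eq_iterate]
    funext x
    rw [Function.iterate_add_apply]
  have hf2 : ContDiff ℝ 2 f2 := by
    have key := (contDiff_nat_iff_iteratedDeriv (n := 2) (𝕜 := ℝ) (f := f2)).mpr
      ⟨fun m hm => by
        rw [hiter m]
        exact hg.continuous_iteratedDeriv (m + 2)
          (by exact_mod_cast by omega : ((m + 2 : ℕ) : WithTop ℕ∞) ≤ 4),
       fun m hm => by
        rw [hiter m]
        exact hg.differentiable_iteratedDeriv (m + 2)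
          (by exact_mod_cast by omega : ((m + 2 : ℕ) : WithTop ℕ∞) < 4)⟩
    exact_mod_cast key
  have hF2c : ContDiff ℝ 2 (fun s : ℝ => f2 (c - s)) :=
    hf2.comp (contDiff_const.sub contDiff_id)
  -- Taylor expansions
  obtain ⟨ξ1, hξ1, eq1⟩ := taylor4 g hg t τ hτ
  obtain ⟨ξ2, hξ2, eq2⟩ := taylor4 (fun s => g (c - s)) hGc t τ hτ
  obtain ⟨ξ3, hξ3, eq3⟩ := taylor2 f2 hf2 t τ hτ
  obtain ⟨ξ4, hξ4, eq4⟩ := taylor2 (fun s => f2 (c - s)) hF2c t τ hτ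
  -- rewrite reflected expansions
  have hd1 : ∀ (f : ℝ → ℝ) (x : ℝ), deriv (fun s : ℝ => f (c - s)) x = - deriv f (c - x) := by
    intro f x
    have h := iteratedDeriv_comp_const_sub' 1 f c x
    simpa [iteratedDeriv_one] using h
  rw [show c - (t + τ) = t - τ by ring] at *
  have eq2' : g (t - τ) = g t - τ * deriv g t + τ ^ 2 / 2 * iteratedDeriv 2 g t
      - τ ^ 3 / 6 * iteratedDeriv 3 g t + τ ^ 4 / 24 * iteratedDeriv 4 g (c - ξ2) := by
    have h2 := iteratedDeriv_comp_const_sub' 2 g c t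
    have h3 := iteratedDeriv_comp_const_sub' 3 g c t
    have h4 := iteratedDeriv_comp_const_sub' 4 g c ξ2
    have hct : c - t = t := by rw [hc]; ring
    rw [eq2, hd1 g t, h2, h3, h4, hct]
    norm_num
    ring
  have eq4' : f2 (t - τ) = f2 t - τ * deriv f2 t + τ ^ 2 / 2 * iteratedDeriv 2 f2 (c - ξ4) := by
    have h2 := iteratedDeriv_comp_const_sub' 2 f2 c ξ4
    have hct : c - t = t := by rw [hc]; ring
    rw [eq4, hd1 f2 t, h2, hct]
    norm_num
    ring
  -- abbreviations
  set A := iteratedDeriv 4 g ξ1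
  set B := iteratedDeriv 4 g (c - ξ2)
  have hC : iteratedDeriv 2 f2 ξ3 = iteratedDeriv 4 g ξ3 := by rw [hiter 2]
  have hD : iteratedDeriv 2 f2 (c - ξ4) = iteratedDeriv 4 g (c - ξ4) := by rw [hiter 2]
  set C := iteratedDeriv 4 g ξ3
  set D := iteratedDeriv 4 g (c - ξ4)
  rw [hC] at eq3
  rw [hD] at eq4'
  -- membership
  have mem1 : ξ1 ∈ Set.Icc (t - τ) (t + τ) :=
    ⟨by linarith [hξ1.1], le_of_lt hξ1.2⟩
  have mem2 : c - ξ2 ∈ Set.Icc (t - τ) (t + τ) :=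
    ⟨by simp only [hc]; linarith [hξ2.2], by simp only [hc]; linarith [hξ2.1]⟩
  have mem3 : ξ3 ∈ Set.Icc (t - τ) (t + τ) :=
    ⟨by linarith [hξ3.1], le_of_lt hξ3.2⟩
  have mem4 : c - ξ4 ∈ Set.Icc (t - τ) (t + τ) :=
    ⟨by simp only [hc]; linarith [hξ4.2], by simp only [hc]; linarith [hξ4.1]⟩
  have hA := hM _ mem1
  have hB := hM _ mem2
  have hC' := hM _ mem3
  have hD' := hM _ mem4
  -- key identity
  have hτ2 : (τ : ℝ) ^ 2 ≠ 0 := by positivity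
  have hdiv : (g (t + τ) - 2 * g t + g (t - τ)) / τ ^ 2 =
      iteratedDeriv 2 g t + τ ^ 2 / 24 * (A + B) := by
    rw [eq1, eq2']
    field_simp
    ring
  have hexpr : (g (t + τ) - 2 * g t + g (t - τ)) / τ ^ 2 -
      (θ * iteratedDeriv 2 g (t + τ) + (1 - 2 * θ) * iteratedDeriv 2 g t +
        θ * iteratedDeriv 2 g (t - τ)) =
      τ ^ 2 / 24 * (A + B) - θ * (τ ^ 2 / 2) * (C + D) := by
    rw [hdiv]
    have e3 : iteratedDeriv 2 g (t + τ) = f2 (t + τ) := rfl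
    have e4 : iteratedDeriv 2 g (t - τ) = f2 (t - τ) := rfl
    rw [e3, e4, eq3, eq4']
    have : deriv f2 = iteratedDeriv 3 g := by
      rw [hf2def, ← iteratedDeriv_succ]
    rw [this]
    have ht : f2 t = iteratedDeriv 2 g t := rfl
    rw [ht]
    ring
  rw [hexpr]
  have step1 : |τ ^ 2 / 24 * (A + B) - θ * (τ ^ 2 / 2) * (C + D)| ≤
      τ ^ 2 / 24 * |A + B| + θ * (τ ^ 2 / 2) * |C + D| := by
    refine (abs_sub _ _).trans ?_
    rw [abs_mul, abs_mul, abs_of_nonneg (by positivity : (0:ℝ) ≤ τ ^ 2 / 24),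
      abs_of_nonneg (by positivity : (0:ℝ) ≤ θ * (τ ^ 2 / 2))]
  have hAB : |A + B| ≤ 2 * M := (abs_add_le A B).trans (by linarith)
  have hCD : |C + D| ≤ 2 * M := (abs_add_le C D).trans (by linarith)
  have hθτ : 0 ≤ θ * (τ ^ 2 / 2) := by positivity
  calc |τ ^ 2 / 24 * (A + B) - θ * (τ ^ 2 / 2) * (C + D)|
      ≤ τ ^ 2 / 24 * |A + B| + θ * (τ ^ 2 / 2) * |C + D| := step1
    _ ≤ τ ^ 2 / 24 * (2 * M) + θ * (τ ^ 2 / 2) * (2 * M) := by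
        gcongr
    _ = (1 / 12 + θ) * M * τ ^ 2 := by ring
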